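/- Let m, n be coprime positive integers and let t ∈ ℂ with t ≠ 0. Then the formal power series Xⁿ − t·Yᵐ is irreducible in the ring ℂ[[X,Y]] of formal power series in two variables over ℂ. -/

import Mathlib

open Finset MvPowerSeries

namespace Stmt6

noncomputable def fs (p q : ℕ) : Fin 2 →₀ ℕ := Finsupp.single 0 p + Finsupp.single 1 q

@[simp] lemma fs_apply0 (p q : ℕ) : fs p q 0 = p := by simp [fs, Finsupp.single_apply]

@[simp] lemma fs_apply1 (p q : ℕ) : fs p q 1 = q := by simp [fs, Finsupp.single_apply]

lemma fs_eq_self (d : Fin 2 →₀ ℕ) : fs (d 0) (d 1) = d := by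
  ext i; fin_cases i <;> simp [fs, Finsupp.single_apply]

def wt (m n : ℕ) (d : Fin 2 →₀ ℕ) : ℕ := m * d 0 + n * d 1

lemma wt_add (m n : ℕ) (d e : Fin 2 →₀ ℕ) : wt m n (d + e) = wt m n d + wt m n e := by
  simp [wt, Finsupp.add_apply]; ring

noncomputable def F (m n k : ℕ) : Finset (Fin 2 →₀ ℕ) :=
  (Finset.Iic (fs k k)).filter fun d => wt m n d = k

lemma mem_F {m n : ℕ} (hm : 0 < m) (hn : 0 < n) {k : ℕ} {d : Fin 2 →₀ ℕ} :
    d ∈ F m n k ↔ wt m n d = k := by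
  constructor
  · exact fun h => (Finset.mem_filter.mp h).2
  · intro h
    refine Finset.mem_filter.mpr ⟨Finset.mem_Iic.mpr (Finsupp.le_def.mpr fun i => ?_), h⟩
    have h0 : d 0 ≤ m * d 0 := Nat.le_mul_of_pos_left _ hm
    have h1 : d 1 ≤ n * d 1 := Nat.le_mul_of_pos_left _ hn
    unfold wt at h
    fin_cases i <;> simp [fs, Finsupp.single_apply] <;> omega

/-- The substitution map `X ↦ a·sᵐ`, `Y ↦ sⁿ`, defined coefficientwise. -/
noncomputable def phi (m n : ℕ) (a : ℂ) (g : MvPowerSeries (Fin 2) ℂ) : PowerSeries ℂ :=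
  PowerSeries.mk fun k => ∑ d ∈ F m n k, a ^ (d 0) * MvPowerSeries.coeff d g

lemma coeff_phi (m n : ℕ) (a : ℂ) (g : MvPowerSeries (Fin 2) ℂ) (k : ℕ) :
    PowerSeries.coeff k (phi m n a g) = ∑ d ∈ F m n k, a ^ (d 0) * MvPowerSeries.coeff d g :=
  PowerSeries.coeff_mk _ _

lemma phi_mul {m n : ℕ} (hm : 0 < m) (hn : 0 < n) (a : ℂ) (g h : MvPowerSeries (Fin 2) ℂ) :
    phi m n a (g * h) = phi m n a g * phi m n a h := by
  ext k
  rw [PowerSeries.coeff_mul, coeff_phi]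
  have lhs : ∑ d ∈ F m n k, a ^ (d 0) * MvPowerSeries.coeff d (g * h) =
      ∑ d ∈ F m n k, ∑ p ∈ Finset.HasAntidiagonal.antidiagonal d,
        a ^ (d 0) * (MvPowerSeries.coeff p.1 g * MvPowerSeries.coeff p.2 h) := by
    simp_rw [MvPowerSeries.coeff_mul, Finset.mul_sum]
  rw [lhs]
  have rhs : ∀ p : ℕ × ℕ,
      PowerSeries.coeff p.1 (phi m n a g) * PowerSeries.coeff p.2 (phi m n a h) =
      ∑ q ∈ F m n p.1 ×ˢ F m n p.2,
        (a ^ (q.1 0) * MvPowerSeries.coeff q.1 g) *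
          (a ^ (q.2 0) * MvPowerSeries.coeff q.2 h) := by
    intro p
    rw [coeff_phi, coeff_phi, Finset.sum_mul_sum]
    rw [Finset.sum_product]
  simp_rw [rhs]
  rw [Finset.sum_sigma', Finset.sum_sigma']
  refine Finset.sum_nbij' (fun x => ⟨(wt m n x.2.1, wt m n x.2.2), x.2⟩)
    (fun x => ⟨x.2.1 + x.2.2, x.2⟩) ?_ ?_ ?_ ?_ ?_
  · rintro ⟨d, p⟩ hx
    simp only [Finset.mem_sigma, Finset.HasAntidiagonal.mem_antidiagonal] at hx ⊢
    obtain ⟨hd, hp⟩ := hx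
    rw [mem_F hm hn] at hd
    refine ⟨by rw [← wt_add, hp, hd], Finset.mem_product.mpr ⟨(mem_F hm hn).mpr rfl, (mem_F hm hn).mpr rfl⟩⟩
  · rintro ⟨kk, q⟩ hx
    simp only [Finset.mem_sigma, Finset.HasAntidiagonal.mem_antidiagonal] at hx
    obtain ⟨hkk, hq⟩ := hx
    obtain ⟨h1, h2⟩ := Finset.mem_product.mp hq
    rw [mem_F hm hn] at h1 h2
    refine Finset.mem_sigma.mpr ⟨(mem_F hm hn).mpr (by rw [wt_add, h1, h2, hkk]), Finset.HasAntidiagonal.mem_antidiagonal.mpr rfl⟩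
  · rintro ⟨d, p⟩ hx
    simp only [Finset.mem_sigma, Finset.HasAntidiagonal.mem_antidiagonal] at hx
    obtain ⟨-, hp⟩ := hx
    subst hp
    rfl
  · rintro ⟨kk, q⟩ hx
    simp only [Finset.mem_sigma] at hx
    obtain ⟨hkk, hq⟩ := hx
    obtain ⟨h1, h2⟩ := Finset.mem_product.mp hq
    rw [mem_F hm hn] at h1 h2
    obtain ⟨k1, k2⟩ := kk
    simp only at h1 h2
    subst h1 h2
    rfl
  · rintro ⟨d, p⟩ hx
    simp only [Finset.mem_sigma, Finset.HasAntidiagonal.mem_antidiagonal] at hx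
    obtain ⟨-, hp⟩ := hx
    have : d 0 = p.1 0 + p.2 0 := by rw [← hp]; simp [Finsupp.add_apply]
    rw [this, pow_add]
    ring

lemma phi_f {m n : ℕ} (hm : 0 < m) (hn : 0 < n) {t a : ℂ} (ha : a ^ n = t) :
    phi m n a ((MvPowerSeries.X 0 : MvPowerSeries (Fin 2) ℂ) ^ n -
      (MvPowerSeries.C (σ := Fin 2) (R := ℂ)) t * MvPowerSeries.X 1 ^ m) = 0 := by
  ext k
  rw [coeff_phi, map_zero]
  have step : ∀ d ∈ F m n k,
      a ^ (d 0) * MvPowerSeries.coeff d ((MvPowerSeries.X 0 : MvPowerSeries (Fin 2) ℂ) ^ n -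
        (MvPowerSeries.C (σ := Fin 2) (R := ℂ)) t * MvPowerSeries.X 1 ^ m)
      = (if d = Finsupp.single 0 n then a ^ (d 0) else 0)
        - (if d = Finsupp.single 1 m then t * a ^ (d 0) else 0) := by
    intro d _
    rw [map_sub, MvPowerSeries.coeff_C_mul, MvPowerSeries.coeff_X_pow, MvPowerSeries.coeff_X_pow]
    split_ifs <;> ring
  rw [Finset.sum_congr rfl step, Finset.sum_sub_distrib, Finset.sum_ite_eq', Finset.sum_ite_eq']
  have h1 : wt m n (Finsupp.single 0 n) = m * n := by simp [wt, Finsupp.single_apply]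
  have h2 : wt m n (Finsupp.single 1 m) = n * m := by simp [wt, Finsupp.single_apply]
  by_cases hk : m * n = k
  · rw [if_pos ((mem_F hm hn).mpr (by rw [h1, hk])),
      if_pos ((mem_F hm hn).mpr (by rw [h2, Nat.mul_comm]; exact hk))]
    simp [Finsupp.single_apply, ha]
  · rw [if_neg (fun hmem => hk (by rw [← h1]; exact (mem_F hm hn).mp hmem)),
      if_neg (fun hmem => hk (by have := (mem_F hm hn).mp hmem; rw [h2, Nat.mul_comm] at this; exact this))]
    simp

lemma F_eq {m n : ℕ} (hm : 0 < m) (hn : 0 < n) (hmn : Nat.Coprime m n)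
    {i j : ℕ} (hi : i < n) :
    F m n (m * i + n * j) = (Finset.range (j / m + 1)).image fun r => fs (i + r * n) (j - r * m) := by
  ext d
  rw [mem_F hm hn, Finset.mem_image]
  constructor
  · intro hd
    unfold wt at hd
    have key : ∃ r, d 0 = i + r * n ∧ j = d 1 + r * m := by
      rcases Nat.lt_or_ge (d 0) i with hlt | hge
      · exfalso
        have h' : m * (d 0 + 1) ≤ m * i := Nat.mul_le_mul_left m hlt
        rw [Nat.mul_add] at h'
        have hq : n * j < n * d 1 := by omega
        have hq' : j < d 1 := Nat.lt_of_mul_lt_mul_left hq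
        have heq : m * (i - d 0) = n * (d 1 - j) := by
          zify [hlt.le, hq'.le]
          linarith
        have hdvd : n ∣ m * (i - d 0) := by rw [heq]; exact Dvd.intro _ rfl
        have hdvd2 : n ∣ (i - d 0) := (hmn.symm).dvd_of_dvd_mul_left hdvd
        have := Nat.le_of_dvd (by omega) hdvd2
        omega
      · have h' : m * i ≤ m * d 0 := Nat.mul_le_mul_left m hge
        have hq : n * d 1 ≤ n * j := by omega
        have hq' : d 1 ≤ j := Nat.le_of_mul_le_mul_left hq hn
        have heq : m * (d 0 - i) = n * (j - d 1) := by
          zify [hge, hq']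
          linarith
        have hdvd : n ∣ m * (d 0 - i) := by rw [heq]; exact Dvd.intro _ rfl
        obtain ⟨r, hr⟩ := (hmn.symm).dvd_of_dvd_mul_left hdvd
        have hr' : d 0 - i = r * n := by rw [hr, Nat.mul_comm]
        refine ⟨r, by omega, ?_⟩
        have h2 : n * (m * r) = n * (j - d 1) := by rw [← heq, hr]; ring
        have h3 := Nat.eq_of_mul_eq_mul_left hn h2
        have h4 : r * m = j - d 1 := by rw [Nat.mul_comm]; exact h3
        omega
    obtain ⟨r, h1, h2⟩ := key
    refine ⟨r, Finset.mem_range.mpr ?_, ?_⟩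
    · have hrm : r * m ≤ j := by omega
      have := (Nat.le_div_iff_mul_le hm).mpr hrm
      omega
    · rw [← fs_eq_self d]
      congr 1 <;> omega
  · rintro ⟨r, hr, rfl⟩
    have hrm : r * m ≤ j := (Nat.le_div_iff_mul_le hm).mp (Finset.mem_range.mp hr |> Nat.lt_succ_iff.mp)
    unfold wt
    rw [fs_apply0, fs_apply1]
    zify [hrm]
    ring

lemma key_sum {m n : ℕ} (hm : 0 < m) (hn : 0 < n) (hmn : Nat.Coprime m n)
    {t a : ℂ} (ha : a ^ n = t) (ha0 : a ≠ 0) {g : MvPowerSeries (Fin 2) ℂ}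
    (hg : phi m n a g = 0) {i j : ℕ} (hi : i < n) :
    ∑ r ∈ Finset.range (j / m + 1),
      t ^ r * MvPowerSeries.coeff (fs (i + r * n) (j - r * m)) g = 0 := by
  have h0 := congrArg (PowerSeries.coeff (m * i + n * j)) hg
  have hinj : ∀ x ∈ Finset.range (j / m + 1), ∀ y ∈ Finset.range (j / m + 1),
      fs (i + x * n) (j - x * m) = fs (i + y * n) (j - y * m) → x = y := by
    intro x _ y _ hEq
    have h5 := congrArg (fun d : Fin 2 →₀ ℕ => d 0) hEq
    simp only [fs_apply0] at h5
    have h6 : x * n = y * n := by omega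
    exact Nat.eq_of_mul_eq_mul_right hn h6
  rw [coeff_phi, map_zero, F_eq hm hn hmn hi, Finset.sum_image hinj] at h0
  have step : ∀ r ∈ Finset.range (j / m + 1),
      a ^ (fs (i + r * n) (j - r * m) 0) * MvPowerSeries.coeff (fs (i + r * n) (j - r * m)) g
      = a ^ i * (t ^ r * MvPowerSeries.coeff (fs (i + r * n) (j - r * m)) g) := by
    intro r _
    rw [fs_apply0, pow_add, Nat.mul_comm r n, pow_mul, ha]
    ring
  rw [Finset.sum_congr rfl step, ← Finset.mul_sum] at h0
  exact (mul_eq_zero.mp h0).resolve_left (pow_ne_zero _ ha0)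


lemma dvd_of_phi_eq_zero {m n : ℕ} (hm : 0 < m) (hn : 0 < n) (hmn : Nat.Coprime m n)
    {t a : ℂ} (ha : a ^ n = t) (ha0 : a ≠ 0) {g : MvPowerSeries (Fin 2) ℂ}
    (hg : phi m n a g = 0) :
    ((MvPowerSeries.X 0 : MvPowerSeries (Fin 2) ℂ) ^ n -
      (MvPowerSeries.C (σ := Fin 2) (R := ℂ)) t * MvPowerSeries.X 1 ^ m) ∣ g := by
  classical
  refine ⟨(fun e => ∑ r ∈ Finset.range (e 1 / m + 1),
      t ^ r * MvPowerSeries.coeff (fs (e 0 + (r + 1) * n) (e 1 - r * m)) g :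
      MvPowerSeries (Fin 2) ℂ), ?_⟩
  set q : MvPowerSeries (Fin 2) ℂ := (fun e => ∑ r ∈ Finset.range (e 1 / m + 1),
      t ^ r * MvPowerSeries.coeff (fs (e 0 + (r + 1) * n) (e 1 - r * m)) g) with hqdef
  have coeff_q : ∀ e : Fin 2 →₀ ℕ, MvPowerSeries.coeff e q =
      ∑ r ∈ Finset.range (e 1 / m + 1),
        t ^ r * MvPowerSeries.coeff (fs (e 0 + (r + 1) * n) (e 1 - r * m)) g := by
    intro e
    rw [MvPowerSeries.coeff_apply, hqdef]
  ext d
  set S : ℂ := ∑ r ∈ Finset.range (d 1 / m + 1),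
      t ^ r * MvPowerSeries.coeff (fs (d 0 + r * n) (d 1 - r * m)) g with hSdef
  have expand : ((MvPowerSeries.X 0 : MvPowerSeries (Fin 2) ℂ) ^ n -
        (MvPowerSeries.C (σ := Fin 2) (R := ℂ)) t * MvPowerSeries.X 1 ^ m) * q
      = (MvPowerSeries.X 0 : MvPowerSeries (Fin 2) ℂ) ^ n * q
        - (MvPowerSeries.C (σ := Fin 2) (R := ℂ)) t * (MvPowerSeries.X 1 ^ m * q) := by ring
  rw [expand, map_sub, MvPowerSeries.coeff_C_mul, MvPowerSeries.X_pow_eq,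
    MvPowerSeries.X_pow_eq, MvPowerSeries.coeff_monomial_mul, MvPowerSeries.coeff_monomial_mul]
  have hle0 : Finsupp.single (0 : Fin 2) n ≤ d ↔ n ≤ d 0 := Finsupp.single_le_iff
  have hle1 : Finsupp.single (1 : Fin 2) m ≤ d ↔ m ≤ d 1 := Finsupp.single_le_iff
  have hsub0_0 : (d - Finsupp.single (0 : Fin 2) n) 0 = d 0 - n := by
    rw [Finsupp.tsub_apply, Finsupp.single_eq_same]
  have hsub0_1 : (d - Finsupp.single (0 : Fin 2) n) 1 = d 1 := by
    rw [Finsupp.tsub_apply, Finsupp.single_eq_of_ne (by decide)]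
    omega
  have hsub1_0 : (d - Finsupp.single (1 : Fin 2) m) 0 = d 0 := by
    rw [Finsupp.tsub_apply, Finsupp.single_eq_of_ne (by decide)]
    omega
  have hsub1_1 : (d - Finsupp.single (1 : Fin 2) m) 1 = d 1 - m := by
    rw [Finsupp.tsub_apply, Finsupp.single_eq_same]
  have hS0 : ¬ n ≤ d 0 → S = 0 := by
    intro h
    rw [hSdef]
    exact key_sum hm hn hmn ha ha0 hg (by omega)
  have hSg : d 1 < m → S = MvPowerSeries.coeff d g := by
    intro h
    rw [hSdef, Nat.div_eq_of_lt h]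
    simp [fs_eq_self d]
  have hA : n ≤ d 0 → MvPowerSeries.coeff (d - Finsupp.single 0 n) q = S := by
    intro h
    rw [coeff_q, hsub0_0, hsub0_1, hSdef]
    refine Finset.sum_congr rfl fun r _ => ?_
    have h1 : (r + 1) * n = r * n + n := by ring
    have h2 : d 0 - n + (r + 1) * n = d 0 + r * n := by omega
    rw [h2]
  have hB : m ≤ d 1 → t * MvPowerSeries.coeff (d - Finsupp.single 1 m) q
      = S - MvPowerSeries.coeff d g := by
    intro h
    rw [coeff_q, hsub1_0, hsub1_1]
    have hdiv : d 1 / m = (d 1 - m) / m + 1 := by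
      have h1 : d 1 - m + m = d 1 := by omega
      rw [← h1, Nat.add_div_right _ hm, h1]
    have hS' : S = (∑ r ∈ Finset.range ((d 1 - m) / m + 1),
        t ^ (r + 1) * MvPowerSeries.coeff (fs (d 0 + (r + 1) * n) (d 1 - (r + 1) * m)) g)
        + MvPowerSeries.coeff d g := by
      rw [hSdef, hdiv, Finset.sum_range_succ']
      congr 1
      simp [fs_eq_self d]
    rw [hS', Finset.mul_sum]
    rw [add_sub_cancel_right]
    refine Finset.sum_congr rfl fun r _ => ?_
    have h1 : (r + 1) * m = r * m + m := by ring
    have h2 : d 1 - m - r * m = d 1 - (r + 1) * m := by omega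
    rw [h2]
    ring
  by_cases h1 : Finsupp.single (0 : Fin 2) n ≤ d <;>
    by_cases h2 : Finsupp.single (1 : Fin 2) m ≤ d
  · rw [if_pos h1, if_pos h2, one_mul, one_mul, hA (hle0.mp h1), hB (hle1.mp h2)]
    ring
  · rw [if_pos h1, if_neg h2, one_mul, hA (hle0.mp h1), mul_zero, sub_zero,
      hSg (Nat.lt_of_not_le fun hh => h2 (hle1.mpr hh))]
  · rw [if_neg h1, if_pos h2, one_mul, hB (hle1.mp h2),
      hS0 (fun hh => h1 (hle0.mpr hh))]
    ring
  · rw [if_neg h1, if_neg h2, mul_zero, sub_zero]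
    have hg0 : MvPowerSeries.coeff d g = 0 := by
      rw [← hSg (Nat.lt_of_not_le fun hh => h2 (hle1.mpr hh)),
        hS0 (fun hh => h1 (hle0.mpr hh))]
    rw [hg0]

end Stmt6

/-- For coprime positive integers `m, n` and `t ∈ ℂ`, `t ≠ 0`, the
formal power series `Xⁿ − t·Yᵐ` is irreducible in `ℂ[[X,Y]]`. -/
theorem irreducible_X_pow_sub_smul_Y_pow (m n : ℕ) (hm : 0 < m) (hn : 0 < n)
    (hmn : Nat.Coprime m n) (t : ℂ) (ht : t ≠ 0) :
    Irreducible ((MvPowerSeries.X 0 : MvPowerSeries (Fin 2) ℂ) ^ n -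
      (MvPowerSeries.C (σ := Fin 2) (R := ℂ)) t * MvPowerSeries.X 1 ^ m) := by
  obtain ⟨a, ha⟩ := IsAlgClosed.exists_pow_nat_eq t hn
  have ha0 : a ≠ 0 := fun h => ht (by rw [← ha, h, zero_pow hn.ne'])
  set f : MvPowerSeries (Fin 2) ℂ := (MvPowerSeries.X 0 : MvPowerSeries (Fin 2) ℂ) ^ n -
      (MvPowerSeries.C (σ := Fin 2) (R := ℂ)) t * MvPowerSeries.X 1 ^ m with hf
  have hphif : Stmt6.phi m n a f = 0 := Stmt6.phi_f hm hn ha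
  have hdvd_phi : ∀ x : MvPowerSeries (Fin 2) ℂ, f ∣ x → Stmt6.phi m n a x = 0 := by
    rintro x ⟨c, rfl⟩
    rw [Stmt6.phi_mul hm hn, hphif, zero_mul]
  have hf0 : f ≠ 0 := by
    intro h
    have hne : (Finsupp.single (0 : Fin 2) n) ≠ Finsupp.single 1 m := by
      intro hEq
      have := congrArg (fun d : Fin 2 →₀ ℕ => d 0) hEq
      simp [Finsupp.single_apply] at this
      omega
    have hc := congrArg (MvPowerSeries.coeff (Finsupp.single (0 : Fin 2) n)) h
    rw [hf] at hc
    simp [map_sub, MvPowerSeries.coeff_X_pow, MvPowerSeries.coeff_C_mul, hne] at hc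
  have hfu : ¬ IsUnit f := by
    intro h
    have hc : MvPowerSeries.constantCoeff f = 0 := by
      rw [hf]
      simp [map_sub, map_mul, map_pow, hn.ne', hm.ne']
    have := MvPowerSeries.isUnit_constantCoeff f h
    rw [hc] at this
    exact not_isUnit_zero this
  have hprime : Prime f := by
    refine ⟨hf0, hfu, fun x y hxy => ?_⟩
    have h0 : Stmt6.phi m n a x * Stmt6.phi m n a y = 0 := by
      rw [← Stmt6.phi_mul hm hn]
      exact hdvd_phi _ hxy
    rcases mul_eq_zero.mp h0 with h | h
    · exact Or.inl (Stmt6.dvd_of_phi_eq_zero hm hn hmn ha ha0 h)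
    · exact Or.inr (Stmt6.dvd_of_phi_eq_zero hm hn hmn ha ha0 h)
  have : IsDomain (MvPowerSeries (Fin 2) ℂ) := NoZeroDivisors.to_isDomain _
  exact hprime.irreducible
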